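/- arXiv:2002.03613 — 8 statements merged into one kernel-verified Lean document; each statement's English description precedes it below -/
import Mathlib

section
/- Let n and f be natural numbers, let P be a finite type of cardinality n, and let F be a finite subset of P of cardinality at most f. If Q₁ and Q₂ are finite subsets of P each of cardinality at least ⌊(n+f)/2⌋ + 1, then the set (Q₁ ∩ Q₂) \ F is nonempty; that is, any two quorums have a common correct member. -/
/-- Any two quorums have a common correct (non-faulty) member. -/
theorem quorums_common_correct_member (n f : ℕ) (P : Type*) [Fintype P] [DecidableEq P]
    (hP : Fintype.card P = n) (F : Finset P) (hF : F.card ≤ f)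
    (Q₁ Q₂ : Finset P)
    (hQ₁ : (n + f) / 2 + 1 ≤ Q₁.card) (hQ₂ : (n + f) / 2 + 1 ≤ Q₂.card) :
    ((Q₁ ∩ Q₂) \ F).Nonempty := by
  have hunion : (Q₁ ∪ Q₂).card ≤ n := hP ▸ Finset.card_le_univ _
  have h := Finset.card_union_add_card_inter Q₁ Q₂
  have hhalf : n + f ≤ 2 * ((n + f) / 2) + 1 := by omega
  have hinter : f + 1 ≤ (Q₁ ∩ Q₂).card := by omega
  have : F.card < (Q₁ ∩ Q₂).card := by omega
  rw [← Finset.card_pos]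
  have hle : (Q₁ ∩ Q₂).card - F.card ≤ ((Q₁ ∩ Q₂) \ F).card := Finset.le_card_sdiff F _
  omega
end

section
/- Let n and f be natural numbers with f ≤ n, let P be a finite type of cardinality n, and let F be a finite subset of P of cardinality at most f. If Q is a finite subset of P of cardinality at least ⌊(n+f)/2⌋ + 1, then the cardinality of Q \ F is at least ⌊(n−f)/2⌋ + 1. -/
/-- Any quorum contains at least ⌊(n−f)/2⌋ + 1 correct processes. -/
theorem quorum_correct_members_sharp (n f : ℕ) (hfn : f ≤ n)
    (P : Type*) [Fintype P] [DecidableEq P] (hP : Fintype.card P = n)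
    (F : Finset P) (hF : F.card ≤ f)
    (Q : Finset P) (hQ : (n + f) / 2 + 1 ≤ Q.card) :
    (n - f) / 2 + 1 ≤ (Q \ F).card := by
  have h1 : Q.card - F.card ≤ (Q \ F).card := Finset.le_card_sdiff F Q
  omega
end

section
/- Let n and f be natural numbers, let P be a finite type of cardinality n, let V be a type of values, and let F be a finite subset of P of cardinality at most f. Let vote : P → V → Prop be such that every correct process votes for at most one value, i.e., for all p ∉ F and all values w, w', vote p w and vote p w' imply w = w'. If there exist finite subsets Q and Q' of P, each of cardinality at least ⌊(n+f)/2⌋ + 1, and values v and v' such that vote p v holds for all p ∈ Q and vote p v' holds for all p ∈ Q', then v = v'. -/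
/-- Abstract Lemma 1: if correct processes vote for at most one value, then no
two distinct values can each gather a quorum of votes. -/
theorem no_two_quorum_values (n f : ℕ) (P : Type*) [Fintype P] [DecidableEq P]
    (hP : Fintype.card P = n) (V : Type*)
    (F : Finset P) (hF : F.card ≤ f)
    (vote : P → V → Prop)
    (hvote : ∀ p ∉ F, ∀ w w' : V, vote p w → vote p w' → w = w')
    (Q Q' : Finset P)
    (hQ : (n + f) / 2 + 1 ≤ Q.card) (hQ' : (n + f) / 2 + 1 ≤ Q'.card)
    (v v' : V)
    (hv : ∀ p ∈ Q, vote p v) (hv' : ∀ p ∈ Q', vote p v') :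
    v = v' := by
  have hu : (Q ∪ Q').card ≤ n := hP ▸ Finset.card_le_univ _
  have hadd : Q.card + Q'.card = (Q ∪ Q').card + (Q ∩ Q').card :=
    (Finset.card_union_add_card_inter Q Q').symm
  have hi : f + 1 ≤ (Q ∩ Q').card := by omega
  have : F.card < (Q ∩ Q').card := by omega
  have hsd : (Q ∩ Q').card - F.card ≤ ((Q ∩ Q') \ F).card := Finset.le_card_sdiff F _
  have hne : ((Q ∩ Q') \ F).Nonempty := Finset.card_pos.mp (by omega)
  obtain ⟨p, hp⟩ := hne
  obtain ⟨hpQQ, hpF⟩ := Finset.mem_sdiff.mp hp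
  exact hvote p hpF v v' (hv p (Finset.mem_inter.mp hpQQ).1)
    (hv' p (Finset.mem_inter.mp hpQQ).2)
end

section
/- Let n and f be natural numbers with f ≤ n, let P be a finite type of cardinality n, let V be a type of values, and let F be a finite subset of P of cardinality at most f. Let prepare : P → V → Prop satisfy: for all p ∉ F and all values w, w', prepare p w and prepare p w' imply w = w'. Let commit : P → V → Prop satisfy: for all p ∉ F and all values w, if commit p w then there exists a finite subset Q of P of cardinality at least ⌊(n+f)/2⌋ + 1 with prepare s w for all s ∈ Q. If there exist finite subsets Q₁ and Q₂ of P, each of cardinality at least ⌊(n+f)/2⌋ + 1, and values v and v' such that commit p v holds for all p ∈ Q₁ and commit p v' holds for all p ∈ Q₂, then v = v'. -/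
lemma quorum_correct_inter {n f : ℕ} {P : Type*} [Fintype P] [DecidableEq P]
    (hP : Fintype.card P = n) {F : Finset P} (hF : F.card ≤ f)
    {Q₁ Q₂ : Finset P}
    (hQ₁ : (n + f) / 2 + 1 ≤ Q₁.card) (hQ₂ : (n + f) / 2 + 1 ≤ Q₂.card) :
    ∃ p, p ∈ Q₁ ∧ p ∈ Q₂ ∧ p ∉ F := by
  have hcard : f + 1 ≤ (Q₁ ∩ Q₂).card := by
    have h1 : Q₁.card + Q₂.card - Fintype.card P ≤ (Q₁ ∩ Q₂).card := by
      have := Finset.card_union_add_card_inter Q₁ Q₂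
      have hu : (Q₁ ∪ Q₂).card ≤ Fintype.card P := Finset.card_le_univ _
      omega
    have h2 : n + f + 1 ≤ 2 * ((n + f) / 2 + 1) := by omega
    omega
  have : ¬ (Q₁ ∩ Q₂ ⊆ F) := fun hsub => by
    have := Finset.card_le_card hsub; omega
  obtain ⟨p, hp, hpF⟩ := Finset.not_subset.mp this
  exact ⟨p, (Finset.mem_inter.mp hp).1, (Finset.mem_inter.mp hp).2, hpF⟩

/-- Same-round agreement: if correct processes prepare at most one value and only
commit values backed by a quorum of prepares, then no two distinct values can
each gather a quorum of commits. -/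
theorem same_round_agreement (n f : ℕ) (hfn : f ≤ n)
    (P : Type*) [Fintype P] [DecidableEq P] (hP : Fintype.card P = n)
    (V : Type*) (F : Finset P) (hF : F.card ≤ f)
    (prepare : P → V → Prop)
    (hprep : ∀ p ∉ F, ∀ w w' : V, prepare p w → prepare p w' → w = w')
    (commit : P → V → Prop)
    (hcommit : ∀ p ∉ F, ∀ w : V, commit p w →
      ∃ Q : Finset P, (n + f) / 2 + 1 ≤ Q.card ∧ ∀ s ∈ Q, prepare s w)
    (Q₁ Q₂ : Finset P)
    (hQ₁ : (n + f) / 2 + 1 ≤ Q₁.card) (hQ₂ : (n + f) / 2 + 1 ≤ Q₂.card)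
    (v v' : V)
    (hv : ∀ p ∈ Q₁, commit p v) (hv' : ∀ p ∈ Q₂, commit p v') :
    v = v' := by
  obtain ⟨p, hp1, hp2, hpF⟩ := quorum_correct_inter hP hF hQ₁ hQ₂
  obtain ⟨R₁, hR₁, hprep₁⟩ := hcommit p hpF v (hv p hp1)
  obtain ⟨R₂, hR₂, hprep₂⟩ := hcommit p hpF v' (hv' p hp2)
  obtain ⟨q, hq1, hq2, hqF⟩ := quorum_correct_inter hP hF hR₁ hR₂
  exact hprep q hqF v v' (hprep₁ q hq1) (hprep₂ q hq2)
end

section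
/- Let n, f, and r be natural numbers with f ≤ n, let P be a finite type of cardinality n, and let F be a finite subset of P of cardinality at most f. Let report : P → Option ℕ and let S be a finite subset of P with S ∩ F = ∅ and cardinality at least ⌊(n−f)/2⌋ + 1, such that report p = some r for all p ∈ S. Assume validity: for all p ∈ P and all ρ, report p = some ρ implies ρ ≤ r. Then for every finite subset Q of P of cardinality at least ⌊(n+f)/2⌋ + 1, there exists p ∈ Q with report p = some r, and every ρ with report p' = some ρ for some p' ∈ Q satisfies ρ ≤ r; that is, the highest round reported within any quorum is exactly r. -/
/-- The highest prepared round reported within any quorum of ROUND-CHANGE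
messages is exactly r. -/
theorem highest_prepared_round (n f r : ℕ) (hfn : f ≤ n)
    (P : Type*) [Fintype P] [DecidableEq P] (hP : Fintype.card P = n)
    (F : Finset P) (hF : F.card ≤ f)
    (report : P → Option ℕ)
    (S : Finset P) (hSF : S ∩ F = ∅) (hS : (n - f) / 2 + 1 ≤ S.card)
    (hSr : ∀ p ∈ S, report p = some r)
    (hvalid : ∀ (p : P) (ρ : ℕ), report p = some ρ → ρ ≤ r) :
    ∀ Q : Finset P, (n + f) / 2 + 1 ≤ Q.card →
      (∃ p ∈ Q, report p = some r) ∧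
      ∀ p' ∈ Q, ∀ ρ : ℕ, report p' = some ρ → ρ ≤ r := by
  intro Q hQ
  refine ⟨?_, fun p' _ ρ h => hvalid p' ρ h⟩
  have hunion : (Q ∪ S).card ≤ n := hP ▸ Finset.card_le_univ _
  have hinter : Q.card + S.card = (Q ∪ S).card + (Q ∩ S).card :=
    (Finset.card_union_add_card_inter Q S).symm
  have : 0 < (Q ∩ S).card := by omega
  obtain ⟨p, hp⟩ := Finset.card_pos.mp this
  rw [Finset.mem_inter] at hp
  exact ⟨p, hp.1, hSr p hp.2⟩
end

section
/- Let n, f, and r be natural numbers with f ≤ n, let P be a finite type of cardinality n, let V be a type of values, and let F be a finite subset of P of cardinality at most f. Let prepare : P → V → Prop satisfy: for all p ∉ F and all values w, w', prepare p w and prepare p w' imply w = w'. Let S be a finite subset of P with S ∩ F = ∅ and cardinality at least ⌊(n−f)/2⌋ + 1 such that prepare p v holds for all p ∈ S, and let rcReport : P → Option (ℕ × V) satisfy rcReport p = some (r, v) for all p ∈ S and, for all p, pr, pv, rcReport p = some (pr, pv) implies pr ≤ r. Then: (i) there is no finite subset Q of P of cardinality at least ⌊(n+f)/2⌋ + 1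 with rcReport p = none for all p ∈ Q; and (ii) for every value w, if there exist a finite subset Q_rc of P of cardinality at least ⌊(n+f)/2⌋ + 1, a process p ∈ Q_rc, and a natural number pr with rcReport p = some (pr, w), such that pr' ≤ pr whenever rcReport p' = some (pr', pv') for some p' ∈ Q_rc, and there exists a finite subset Q_p of P of cardinality at least ⌊(n+f)/2⌋ + 1 with prepare s w for all s ∈ Q_p, then w = v. -/
/-- Base case of Lemma 2, abstract form: once at least ⌊(n−f)/2⌋ + 1 correct
processes have prepared v at round r, the justification conditions J1 and J2 of
a PRE-PREPARE for round r + 1 can only hold for value v. -/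
theorem preprepare_justification_base (n f r : ℕ) (hfn : f ≤ n)
    (P : Type*) [Fintype P] [DecidableEq P] (hP : Fintype.card P = n)
    (V : Type*) (F : Finset P) (hF : F.card ≤ f)
    (prepare : P → V → Prop)
    (hprep : ∀ p ∉ F, ∀ w w' : V, prepare p w → prepare p w' → w = w')
    (v : V)
    (S : Finset P) (hSF : S ∩ F = ∅) (hS : (n - f) / 2 + 1 ≤ S.card)
    (hSprep : ∀ p ∈ S, prepare p v)
    (rcReport : P → Option (ℕ × V))
    (hSrc : ∀ p ∈ S, rcReport p = some (r, v))
    (hvalid : ∀ (p : P) (pr : ℕ) (pv : V), rcReport p = some (pr, pv) → pr ≤ r) :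
    (¬ ∃ Q : Finset P, (n + f) / 2 + 1 ≤ Q.card ∧ ∀ p ∈ Q, rcReport p = none) ∧
    ∀ w : V,
      (∃ Qrc : Finset P, (n + f) / 2 + 1 ≤ Qrc.card ∧
        ∃ p ∈ Qrc, ∃ pr : ℕ, rcReport p = some (pr, w) ∧
          (∀ p' ∈ Qrc, ∀ (pr' : ℕ) (pv' : V),
            rcReport p' = some (pr', pv') → pr' ≤ pr) ∧
          ∃ Qp : Finset P, (n + f) / 2 + 1 ≤ Qp.card ∧ ∀ s ∈ Qp, prepare s w) →
      w = v := by
  have key : ∀ Q : Finset P, (n + f) / 2 + 1 ≤ Q.card → (Q ∩ S).Nonempty := by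
    intro Q hQ
    rw [Finset.nonempty_iff_ne_empty]
    intro hempty
    have h1 : (Q ∪ S).card ≤ n := hP ▸ Finset.card_le_univ _
    have h2 : (Q ∪ S).card = Q.card + S.card := by
      rw [Finset.card_union_of_disjoint (Finset.disjoint_iff_inter_eq_empty.mpr hempty)]
    omega
  constructor
  · rintro ⟨Q, hQ, hnone⟩
    obtain ⟨p, hpQ⟩ := key Q hQ
    rw [Finset.mem_inter] at hpQ
    have := hSrc p hpQ.2
    rw [hnone p hpQ.1] at this
    exact Option.some_ne_none _ this.symm
  · rintro w ⟨Qrc, hQrc, p, hpQrc, pr, hrc, hmax, Qp, hQp, hprepw⟩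
    obtain ⟨q, hq⟩ := key Qp hQp
    rw [Finset.mem_inter] at hq
    have hqF : q ∉ F := by
      intro h
      have : q ∈ S ∩ F := Finset.mem_inter.mpr ⟨hq.2, h⟩
      rw [hSF] at this
      exact Finset.notMem_empty q this
    exact hprep q hqF w v (hprepw q hq.1) (hSprep q hq.2)
end

section
/- Let n, f, and r be natural numbers with f ≤ n, let P be a finite type of cardinality n, let V be a type of values, and let F be a finite subset of P of cardinality at most f. Let vote : ℕ → P → V → Prop satisfy: for every round ρ, every p ∉ F, and all values w, w', vote ρ p w and vote ρ p w' imply w = w'. Let S be a finite subset of P with S ∩ F = ∅ and cardinality at least ⌊(n−f)/2⌋ + 1, such that vote r p v holds for all p ∈ S. Assume the justification-chain property: for every round ρ > r, every p ∉ F, and every value w, if vote ρ p w then there exist a round ρ' with r ≤ ρ' < ρ and a finite subset Q of P of cardinality at least ⌊(n+f)/2⌋ + 1 with vote ρ' s w for all s ∈ Q. Then for every round ρ ≥ r and every value w, if there exists a finite subset Q of P of cardinality at least ⌊(n+f)/2⌋ + 1 with vote ρ s w for all s ∈ Q, then w = v. -/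
/-- Abstract Lemma 2 with its inductive use: once v is prepared by at least
⌊(n−f)/2⌋ + 1 correct processes at round r, v is the only value that can obtain
a quorum of PREPARE messages at any round ρ ≥ r. -/
theorem prepared_value_locked (n f r : ℕ) (hfn : f ≤ n)
    (P : Type*) [Fintype P] [DecidableEq P] (hP : Fintype.card P = n)
    (V : Type*) (F : Finset P) (hF : F.card ≤ f)
    (vote : ℕ → P → V → Prop)
    (hvote : ∀ (ρ : ℕ), ∀ p ∉ F, ∀ w w' : V, vote ρ p w → vote ρ p w' → w = w')
    (v : V)
    (S : Finset P) (hSF : S ∩ F = ∅) (hS : (n - f) / 2 + 1 ≤ S.card)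
    (hSv : ∀ p ∈ S, vote r p v)
    (hchain : ∀ ρ : ℕ, r < ρ → ∀ p ∉ F, ∀ w : V, vote ρ p w →
      ∃ ρ' : ℕ, r ≤ ρ' ∧ ρ' < ρ ∧
        ∃ Q : Finset P, (n + f) / 2 + 1 ≤ Q.card ∧ ∀ s ∈ Q, vote ρ' s w) :
    ∀ ρ : ℕ, r ≤ ρ → ∀ w : V,
      (∃ Q : Finset P, (n + f) / 2 + 1 ≤ Q.card ∧ ∀ s ∈ Q, vote ρ s w) →
      w = v := by
  intro ρ
  induction ρ using Nat.strong_induction_on with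
  | _ ρ ih =>
    intro hrρ w ⟨Q, hQ, hQw⟩
    have hQF : Q.card ≤ (Q \ F).card + F.card := Finset.card_le_card_sdiff_add_card
    rcases eq_or_lt_of_le hrρ with heq | hlt
    · -- base case: ρ = r, quorum intersects S
      have hsub : (Q \ F) ∪ S ⊆ Fᶜ := by
        intro x hx
        simp only [Finset.mem_union, Finset.mem_sdiff, Finset.mem_compl] at *
        rcases hx with ⟨_, h⟩ | h
        · exact h
        · intro hxF
          have : x ∈ S ∩ F := Finset.mem_inter.mpr ⟨h, hxF⟩
          simp [hSF] at this
      have hne : ((Q \ F) ∩ S).Nonempty := by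
        by_contra h
        rw [Finset.not_nonempty_iff_eq_empty] at h
        have hdisj : Disjoint (Q \ F) S := Finset.disjoint_iff_inter_eq_empty.mpr h
        have hcard : (Q \ F).card + S.card ≤ Fᶜ.card :=
          (Finset.card_union_of_disjoint hdisj) ▸ Finset.card_le_card hsub
        rw [Finset.card_compl, hP] at hcard
        omega
      obtain ⟨p, hp⟩ := hne
      simp only [Finset.mem_inter, Finset.mem_sdiff] at hp
      exact hvote ρ p hp.1.2 w v (hQw p hp.1.1) (heq ▸ hSv p hp.2)
    · -- inductive case
      have hne : (Q \ F).Nonempty := by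
        rw [← Finset.card_pos]
        have := Finset.card_pos (s := Q \ F)
        omega
      obtain ⟨p, hp⟩ := hne
      rw [Finset.mem_sdiff] at hp
      obtain ⟨ρ', hρ'r, hρ'lt, Q', hQ', hQ'w⟩ := hchain ρ hlt p hp.2 w (hQw p hp.1)
      exact ih ρ' hρ'lt hρ'r w ⟨Q', hQ', hQ'w⟩
end

section
/- Let n, f, and r be natural numbers with f ≤ n, let P be a finite type of cardinality n, let V be a type of values, and let F be a finite subset of P of cardinality at most f. Let prepare : ℕ → P → V → Prop satisfy: for every round ρ, every p ∉ F, and all values w, w', prepare ρ p w and prepare ρ p w' imply w = w'. Let commit : ℕ → P → V → Prop satisfy: for every round ρ, every p ∉ F, and every value w, if commit ρ p w then there exists a finite subset Q of P of cardinality at least ⌊(n+f)/2⌋ + 1 with prepare ρ s w for all s ∈ Q. Assume the justification-chain property: for every round ρ > r, every p ∉ F, and every value w, if prepare ρ p w then there exist a round ρ' with r ≤ ρ' < ρ and a finite subset Q of P of cardinality at least ⌊(n+f)/2⌋ + 1 with prepare ρ' s w for all s ∈ Q. Suppose there exists a finite subset Q₀ of P of cardinality at least ⌊(n+f)/2⌋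 + 1 with commit r p v for all p ∈ Q₀. Then for every round ρ ≥ r and every value w, if there exists a finite subset Q of P of cardinality at least ⌊(n+f)/2⌋ + 1 with commit ρ p w for all p ∈ Q, then w = v. -/
/-- Abstract Theorem 1 (Agreement): if a decision on v is reached at round r,
then no quorum of COMMIT messages for a different value can occur at any round
ρ ≥ r. -/
theorem agreement (n f r : ℕ) (hfn : f ≤ n)
    (P : Type*) [Fintype P] [DecidableEq P] (hP : Fintype.card P = n)
    (V : Type*) (F : Finset P) (hF : F.card ≤ f)
    (prepare : ℕ → P → V → Prop)
    (hprep : ∀ (ρ : ℕ), ∀ p ∉ F, ∀ w w' : V,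
      prepare ρ p w → prepare ρ p w' → w = w')
    (commit : ℕ → P → V → Prop)
    (hcommit : ∀ (ρ : ℕ), ∀ p ∉ F, ∀ w : V, commit ρ p w →
      ∃ Q : Finset P, (n + f) / 2 + 1 ≤ Q.card ∧ ∀ s ∈ Q, prepare ρ s w)
    (hchain : ∀ ρ : ℕ, r < ρ → ∀ p ∉ F, ∀ w : V, prepare ρ p w →
      ∃ ρ' : ℕ, r ≤ ρ' ∧ ρ' < ρ ∧
        ∃ Q : Finset P, (n + f) / 2 + 1 ≤ Q.card ∧ ∀ s ∈ Q, prepare ρ' s w)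
    (v : V)
    (Q₀ : Finset P) (hQ₀ : (n + f) / 2 + 1 ≤ Q₀.card)
    (hQ₀v : ∀ p ∈ Q₀, commit r p v) :
    ∀ ρ : ℕ, r ≤ ρ → ∀ w : V,
      (∃ Q : Finset P, (n + f) / 2 + 1 ≤ Q.card ∧ ∀ p ∈ Q, commit ρ p w) →
      w = v := by
  -- any quorum contains a correct process
  have hcorrect : ∀ Q : Finset P, (n + f) / 2 + 1 ≤ Q.card → ∃ p ∈ Q, p ∉ F := by
    intro Q hQ
    by_contra h
    push_neg at h
    have hsub : Q ⊆ F := h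
    have := Finset.card_le_card hsub
    omega
  -- two quorums intersect in a correct process
  have hinter : ∀ Q₁ Q₂ : Finset P, (n + f) / 2 + 1 ≤ Q₁.card →
      (n + f) / 2 + 1 ≤ Q₂.card → ∃ p, p ∈ Q₁ ∧ p ∈ Q₂ ∧ p ∉ F := by
    intro Q₁ Q₂ h1 h2
    have hu : (Q₁ ∪ Q₂).card ≤ n := hP ▸ Finset.card_le_univ _
    have hi : Q₁.card + Q₂.card = (Q₁ ∪ Q₂).card + (Q₁ ∩ Q₂).card :=
      (Finset.card_union_add_card_inter Q₁ Q₂).symm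
    have hic : f + 1 ≤ (Q₁ ∩ Q₂).card := by omega
    by_contra h
    push_neg at h
    have hsub : Q₁ ∩ Q₂ ⊆ F := by
      intro p hp
      rcases Finset.mem_inter.mp hp with ⟨h1', h2'⟩
      by_contra hpF
      exact hpF (h p h1' h2')
    have := Finset.card_le_card hsub
    omega
  -- prepare quorum for v at round r
  obtain ⟨p₀, hp₀Q, hp₀F⟩ := hcorrect Q₀ hQ₀
  obtain ⟨Qv, hQv, hQvp⟩ := hcommit r p₀ hp₀F v (hQ₀v p₀ hp₀Q)
  -- key lemma: prepare quorum at ρ ≥ r implies w = v, by strong induction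
  have key : ∀ ρ : ℕ, r ≤ ρ → ∀ w : V,
      (∀ Q : Finset P, (n + f) / 2 + 1 ≤ Q.card → (∀ s ∈ Q, prepare ρ s w) → w = v) := by
    intro ρ
    induction ρ using Nat.strong_induction_on with
    | _ ρ ih =>
      intro hrρ w Q hQ hQp
      rcases eq_or_lt_of_le hrρ with heq | hlt
      · subst heq
        obtain ⟨p, hp1, hp2, hpF⟩ := hinter Qv Q hQv hQ
        exact hprep _ p hpF w v (hQp p hp2) (hQvp p hp1)
      · obtain ⟨p, hpQ, hpF⟩ := hcorrect Q hQ
        obtain ⟨ρ', hρ'1, hρ'2, Q', hQ', hQ'p⟩ :=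
          hchain ρ hlt p hpF w (hQp p hpQ)
        exact ih ρ' hρ'2 hρ'1 w Q' hQ' hQ'p
  intro ρ hrρ w ⟨Q, hQ, hQc⟩
  obtain ⟨p, hpQ, hpF⟩ := hcorrect Q hQ
  obtain ⟨Q', hQ', hQ'p⟩ := hcommit ρ p hpF w (hQc p hpQ)
  exact key ρ hrρ w Q' hQ' hQ'p
end
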